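/- Let K be a finite field and F a subfield of K, with q = |F| and ℓ = [K : F]. Let V be a finite-dimensional K-vector space and m a natural number. Then the number of F-submodules U of V (V regarded as an F-vector space) with dim_F U = m is congruent, modulo Φ_ℓ(q), to the number of K-submodules W of V with ℓ·dim_K W = m (in particular, to 0 if ℓ does not divide m). -/

import Mathlib

open Polynomial MulAction Pointwise Module

section orbitcount

lemma card_modEq_card_fixedPoints_of_dvd {G X : Type*} [Group G] [MulAction G X] [Finite X]
    (n : ℤ) (h : ∀ x : X, x ∉ fixedPoints G X → n ∣ (Nat.card (orbit G x) : ℤ)) :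
    (Nat.card X : ℤ) ≡ (Nat.card (fixedPoints G X) : ℤ) [ZMOD n] := by
  classical
  have := Fintype.ofFinite X
  have hfix : ∀ x : X, x ∈ fixedPoints G X → orbit G x = {x} := by
    intro x hx
    ext y; simp only [mem_orbit_iff, Set.mem_singleton_iff]
    constructor
    · rintro ⟨g, rfl⟩; exact hx g
    · rintro rfl; exact ⟨1, one_smul _ _⟩
  set Ω := orbitRel.Quotient G X with hΩ
  have hout : ∀ x : X, x ∈ fixedPoints G X → (Quotient.mk'' x : Ω).out = x := by
    intro x hx
    have h1 : Quotient.mk'' ((Quotient.mk'' x : Ω).out) = (Quotient.mk'' x : Ω) :=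
      Quotient.out_eq' _
    have h2 : (Quotient.mk'' x : Ω).out ∈ orbit G x := by
      rw [← MulAction.orbitRel_apply]
      exact Quotient.eq''.mp h1
    rwa [hfix x hx, Set.mem_singleton_iff] at h2
  have hcard : Nat.card X = ∑ ω : Ω, Nat.card ω.orbit := by
    rw [Nat.card_eq_of_bijective _ (selfEquivSigmaOrbits' G X).bijective,
      Nat.card_eq_fintype_card, Fintype.card_sigma]
    exact Finset.sum_congr rfl fun ω _ => (Nat.card_eq_fintype_card).symm
  set s : Finset Ω := Finset.univ.filter (fun ω : Ω => ω.out ∈ fixedPoints G X) with hs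
  have horb : ∀ ω : Ω, ω.orbit = orbit G ω.out :=
    fun ω => orbitRel.Quotient.orbit_eq_orbit_out ω Quotient.out_eq'
  have h1 : ∀ ω ∈ s, Nat.card ω.orbit = 1 := by
    intro ω hω
    rw [horb, hfix _ (by simpa [hs] using hω)]
    simp
  have hcs : s.card = Nat.card (fixedPoints G X) := by
    rw [Nat.card_eq_fintype_card, Fintype.card_subtype]
    refine Finset.card_bij (fun ω _ => ω.out) ?_ ?_ ?_
    · intro ω hω; simpa using (by simpa [hs] using hω : ω.out ∈ fixedPoints G X)
    · intro a _ b _ hab; exact Quotient.out_injective hab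
    · intro x hx
      have hx' : x ∈ fixedPoints G X := by simpa using hx
      exact ⟨Quotient.mk'' x, by
        rw [hs, Finset.mem_filter]
        exact ⟨Finset.mem_univ _, by rw [hout x hx']; exact hx'⟩, hout x hx'⟩
  have hdvd : ∀ ω ∈ sᶜ, n ∣ (Nat.card ω.orbit : ℤ) := by
    intro ω hω
    rw [horb]
    exact h _ (by simpa [hs] using hω)
  have key : (Nat.card X : ℤ) = (Nat.card (fixedPoints G X) : ℤ) +
      ∑ ω ∈ sᶜ, (Nat.card ω.orbit : ℤ) := by
    rw [hcard]
    push_cast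
    rw [← Finset.sum_add_sum_compl s]
    congr 1
    rw [← hcs]
    rw [Finset.sum_congr rfl (fun ω hω => by rw [h1 ω hω])]
    simp
  symm
  rw [Int.modEq_iff_dvd, key]
  simpa using Finset.dvd_sum hdvd

end orbitcount

section cyclo

lemma cyclo_mul_dvd {ℓ d : ℕ} (hd : d ∣ ℓ) (hne : d ≠ ℓ) (hℓ : 0 < ℓ) (q : ℤ) :
    (cyclotomic ℓ ℤ).eval q * (q ^ d - 1) ∣ q ^ ℓ - 1 := by
  have hd0 : 0 < d := Nat.pos_of_ne_zero (by rintro rfl; exact hℓ.ne' ((Nat.zero_dvd).mp hd))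
  have hsub : d.divisors ⊆ ℓ.divisors.erase ℓ := by
    intro i hi
    rw [Nat.mem_divisors] at hi
    refine Finset.mem_erase.mpr ⟨?_, Nat.mem_divisors.mpr ⟨hi.1.trans hd, hℓ.ne'⟩⟩
    rintro rfl
    exact hne (Nat.dvd_antisymm hd (hi.1))
  have hpoly : cyclotomic ℓ ℤ * (X ^ d - 1) ∣ (X : ℤ[X]) ^ ℓ - 1 := by
    rw [← prod_cyclotomic_eq_X_pow_sub_one hℓ, ← prod_cyclotomic_eq_X_pow_sub_one hd0,
      ← Finset.mul_prod_erase _ _ (Nat.mem_divisors_self ℓ hℓ.ne')]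
    exact mul_dvd_mul_left _ (Finset.prod_dvd_prod_of_subset _ _ _ hsub)
  have := Polynomial.eval_dvd (x := q) hpoly
  simpa using this

end cyclo

section aux
variable {F K V : Type*} [Field F] [Field K] [Algebra F K] [AddCommGroup V] [Module K V]
  [Module F V] [IsScalarTower F K V]

variable (F K) in
/-- The intermediate field of scalars stabilizing a submodule. -/
def stabField [Finite V] (U : Submodule F V) : IntermediateField F K where
  carrier := {k : K | ∀ u ∈ U, k • u ∈ U}
  mul_mem' := fun {a b} ha hb u hu => by
    rw [mul_smul]; exact ha _ (hb u hu)
  one_mem' := fun u hu => by simpa using hu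
  add_mem' := fun {a b} ha hb u hu => by
    rw [add_smul]; exact U.add_mem (ha u hu) (hb u hu)
  zero_mem' := fun u hu => by simpa using U.zero_mem
  algebraMap_mem' := fun c u hu => by
    rw [algebraMap_smul]; exact U.smul_mem c hu
  inv_mem' := by
    intro a ha
    rcases eq_or_ne a 0 with rfl | h0
    · simpa using fun u hu => U.zero_mem
    · intro u hu
      have hinj : Function.Injective (fun v : U => (⟨a • v, ha v.1 v.2⟩ : U)) := by
        intro v w hvw
        have := congrArg (Subtype.val) hvw
        simp only at this
        exact Subtype.ext (smul_right_injective V h0 this)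
      obtain ⟨v, hv⟩ := (Finite.injective_iff_surjective.mp hinj) ⟨u, hu⟩
      have hv' : a • (v : V) = u := congrArg Subtype.val hv
      have h2 : a⁻¹ • (a • (v : V)) = (v : V) := inv_smul_smul₀ h0 _
      rw [hv'] at h2
      rw [h2]; exact v.2

lemma mem_stabField_iff [Finite V] {U : Submodule F V} {k : K} :
    k ∈ stabField F K U ↔ ∀ u ∈ U, k • u ∈ U := ⟨fun h => h, fun h => h⟩

lemma smul_eq_iff_mem_stabField [Finite V] (a : Kˣ) (U : Submodule F V) :
    a • U = U ↔ (a : K) ∈ stabField F K U := by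
  constructor
  · intro h
    rw [mem_stabField_iff]
    intro u hu
    have : (a : Kˣ) • u ∈ a • U := Submodule.smul_mem_pointwise_smul u a U hu
    rwa [h, Units.smul_def] at this
  · intro h
    rw [mem_stabField_iff] at h
    have h' : ∀ u ∈ U, ((a:K))⁻¹ • u ∈ U :=
      mem_stabField_iff.mp ((stabField F K U).inv_mem (mem_stabField_iff.mpr h))
    apply le_antisymm
    · rintro v hv
      rcases Submodule.mem_map.mp hv with ⟨u, hu, rfl⟩
      exact h u hu
    · intro u hu
      have h2 : a • ((a⁻¹ : Kˣ) • u) = u := smul_inv_smul a u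
      rw [← h2]
      refine Submodule.smul_mem_pointwise_smul _ a U ?_
      have h3 : ((a⁻¹ : Kˣ) : K) • u ∈ U := by
        rw [Units.val_inv_eq_inv_val]; exact h' u hu
      simpa [Units.smul_def] using h3

end aux

/-- Let `F ⊆ K` be finite fields with `q = |F|` and `ℓ = [K : F]`, and let `V` be a
finite-dimensional `K`-vector space.  Then the number of `F`-submodules `U` of `V` with
`dim_F U = m` is congruent, modulo `Φ_ℓ(q)`, to the number of `K`-submodules `W` of `V`
with `ℓ·dim_K W = m`. -/
theorem card_submodules_modEq_cyclotomic (F K V : Type*) [Field F] [Field K]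
    [Algebra F K] [Finite F] [Finite K] [AddCommGroup V] [Module K V] [Module F V]
    [IsScalarTower F K V] [FiniteDimensional K V] (m : ℕ) :
    (Nat.card {U : Submodule F V // Module.finrank F U = m} : ℤ) ≡
      (Nat.card {W : Submodule K V // Module.finrank F K * Module.finrank K W = m} : ℤ)
      [ZMOD ((Polynomial.cyclotomic (Module.finrank F K) ℤ).eval (Nat.card F : ℤ))] := by
  classical
  have hVfin : Finite V := Module.finite_of_finite K
  set ℓ := Module.finrank F K with hldef
  set q : ℕ := Nat.card F with hqdef
  set c : ℤ := (cyclotomic ℓ ℤ).eval (q : ℤ) with hcdef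
  have hℓpos : 0 < ℓ := Module.finrank_pos
  have hq2 : 2 ≤ q := Finite.one_lt_card
  -- the type of F-submodules of dimension m, with its Kˣ-action
  set X := {U : Submodule F V // Module.finrank F U = m} with hXdef
  have hfr : ∀ (a : Kˣ) (U : Submodule F V),
      Module.finrank F (a • U : Submodule F V) = Module.finrank F U := by
    intro a U
    have h : (a • U : Submodule F V)
        = U.map (DistribMulAction.toLinearEquiv F V a : V →ₗ[F] V) := rfl
    rw [h]
    exact LinearEquiv.finrank_map_eq _ _
  letI act : MulAction Kˣ X :=
    { smul := fun a x => ⟨a • x.1, (hfr a x.1).trans x.2⟩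
      one_smul := fun x => Subtype.ext (one_smul _ x.1)
      mul_smul := fun a b x => Subtype.ext (mul_smul a b x.1) }
  have hsmul_val : ∀ (a : Kˣ) (x : X), (a • x).1 = a • x.1 := fun _ _ => rfl
  -- stabilizers
  have hstab : ∀ (x : X) (a : Kˣ), a ∈ stabilizer Kˣ x ↔ (a : K) ∈ stabField F K x.1 := by
    intro x a
    rw [MulAction.mem_stabilizer_iff, ← smul_eq_iff_mem_stabField a x.1]
    exact ⟨fun h => congrArg Subtype.val h, fun h => Subtype.ext h⟩
  -- cardinalities of fields
  have hcardK : Nat.card K = q ^ ℓ := by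
    have := Fintype.ofFinite K; have := Fintype.ofFinite F
    rw [Nat.card_eq_fintype_card, card_eq_pow_finrank (K := F) (V := K),
      hqdef, Nat.card_eq_fintype_card]
  have hcardE : ∀ E : IntermediateField F K, Nat.card ↥E = q ^ (Module.finrank F ↥E) := by
    intro E
    have : Finite E := Subtype.finite
    have := Fintype.ofFinite E; have := Fintype.ofFinite F
    rw [Nat.card_eq_fintype_card, card_eq_pow_finrank (K := F) (V := E),
      hqdef, Nat.card_eq_fintype_card]
  -- stabilizer has the cardinality of the units of the stabilizing field
  have hstabcard : ∀ x : X,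
      Nat.card (stabilizer Kˣ x) = q ^ (Module.finrank F ↥(stabField F K x.1)) - 1 := by
    intro x
    set E := stabField F K x.1 with hE
    have e1 : Nat.card (stabilizer Kˣ x) = Nat.card Eˣ := by
      apply Nat.card_congr
      refine ⟨fun a => Units.mk0 ⟨(a.1 : K), (hstab x a.1).mp a.2⟩
          (fun hz => a.1.ne_zero (congrArg Subtype.val hz)),
        fun e => ⟨Units.mk0 ((e : E) : K)
          (fun hz => e.ne_zero (Subtype.ext hz)),
          (hstab x _).mpr (by simpa using (e : E).2)⟩, ?_, ?_⟩
      · intro a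
        apply Subtype.ext
        apply Units.ext
        rfl
      · intro e
        apply Units.ext
        apply Subtype.ext
        rfl
    rw [e1, Nat.card_units, hcardE E]
  -- the orbit divisibility
  have horbdvd : ∀ x : X, x ∉ fixedPoints Kˣ X → c ∣ (Nat.card (orbit Kˣ x) : ℤ) := by
    intro x hx
    set E := stabField F K x.1 with hE
    set d := Module.finrank F ↥E with hd
    -- d divides ℓ and d ≠ ℓ
    have hddvd : d ∣ ℓ := ⟨Module.finrank E K, (Module.finrank_mul_finrank F E K).symm⟩
    have hdne : d ≠ ℓ := by
      intro hdl
      apply hx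
      intro a
      apply Subtype.ext
      rw [hsmul_val, smul_eq_iff_mem_stabField]
      have hEtop : E = ⊤ := by
        refine IntermediateField.eq_of_le_of_finrank_eq' le_top ?_
        have h1 : Module.finrank F E * Module.finrank E K = ℓ :=
          Module.finrank_mul_finrank F E K
        have h2 : Module.finrank F (⊤ : IntermediateField F K) *
            Module.finrank (⊤ : IntermediateField F K) K = ℓ :=
          Module.finrank_mul_finrank F _ K
        have h3 : Module.finrank F (⊤ : IntermediateField F K) = ℓ := by
          rw [IntermediateField.finrank_top']
        have h4 : 0 < Module.finrank F E := Module.finrank_pos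
        rw [h3] at h2
        rw [← hd, hdl] at h1
        nlinarith
      rw [← hE, hEtop]
      trivial
    have hdpos : 0 < d := Nat.pos_of_ne_zero (fun h0 => by
      rw [h0] at hddvd
      exact hℓpos.ne' ((Nat.zero_dvd).mp hddvd))
    -- orbit-stabilizer
    have := Fintype.ofFinite X
    have := Fintype.ofFinite Kˣ
    have hos : Nat.card (orbit Kˣ x) * Nat.card (stabilizer Kˣ x) = Nat.card Kˣ := by
      have i1 : Fintype (orbit Kˣ x) := Fintype.ofFinite _
      have i2 : Fintype (stabilizer Kˣ x) := Fintype.ofFinite _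
      rw [Nat.card_eq_fintype_card, Nat.card_eq_fintype_card, Nat.card_eq_fintype_card]
      exact MulAction.card_orbit_mul_card_stabilizer_eq_card_group Kˣ x
    have hKu : Nat.card Kˣ = q ^ ℓ - 1 := by rw [Nat.card_units, hcardK]
    rw [hstabcard x, hKu] at hos
    -- pass to ℤ
    have hqd1 : (1 : ℕ) ≤ q ^ d := Nat.one_le_pow _ _ (by omega)
    have hql1 : (1 : ℕ) ≤ q ^ ℓ := Nat.one_le_pow _ _ (by omega)
    have hosz : (Nat.card (orbit Kˣ x) : ℤ) * ((q : ℤ) ^ d - 1) = (q : ℤ) ^ ℓ - 1 := by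
      have := congrArg (fun n : ℕ => (n : ℤ))
        (show Nat.card (orbit Kˣ x) * (q ^ d - 1) = q ^ ℓ - 1 from hos)
      push_cast [Nat.cast_sub hqd1, Nat.cast_sub hql1] at this
      push_cast
      linarith [this]
    have hdvd2 : c * ((q : ℤ) ^ d - 1) ∣ (q : ℤ) ^ ℓ - 1 :=
      cyclo_mul_dvd hddvd hdne hℓpos (q : ℤ)
    rw [← hosz] at hdvd2
    have hne0 : ((q : ℤ) ^ d - 1) ≠ 0 := by
      have h2q : (2 : ℤ) ≤ (q : ℤ) := by exact_mod_cast hq2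
      have hqq : (q : ℤ) ≤ (q : ℤ) ^ d := le_self_pow₀ (by omega) hdpos.ne'
      have : (1 : ℤ) < (q : ℤ) ^ d := lt_of_lt_of_le (by omega) hqq
      exact sub_ne_zero_of_ne this.ne'
    exact (mul_dvd_mul_iff_right hne0).mp hdvd2
  -- apply the orbit counting lemma
  have hmain := card_modEq_card_fixedPoints_of_dvd (G := Kˣ) (X := X) c horbdvd
  -- identify the fixed points with K-submodules
  have hfixcard : Nat.card (fixedPoints Kˣ X) =
      Nat.card {W : Submodule K V // Module.finrank F K * Module.finrank K W = m} := by
    apply Nat.card_congr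
    refine ⟨fun x => ?_, fun W => ?_, ?_, ?_⟩
    · -- from a fixed point to a K-submodule
      refine ⟨{ (x.1.1 : Submodule F V).toAddSubmonoid with smul_mem' := ?_ }, ?_⟩
      · intro k u hu
        rcases eq_or_ne k 0 with rfl | hk
        · simpa using (x.1.1 : Submodule F V).zero_mem
        · have hfix : (Units.mk0 k hk) • x.1 = x.1 :=
            (MulAction.mem_fixedPoints.mp x.2) (Units.mk0 k hk)
          have h2 : (Units.mk0 k hk) • x.1.1 = x.1.1 := congrArg Subtype.val hfix
          exact mem_stabField_iff.mp ((smul_eq_iff_mem_stabField _ _).mp h2) u hu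
      · -- the rank condition
        set W : Submodule K V :=
          { (x.1.1 : Submodule F V).toAddSubmonoid with smul_mem' := _ } with hW
        show Module.finrank F K * Module.finrank K W = m
        have hWr : (W.restrictScalars F) = x.1.1 := Submodule.ext (fun v => Iff.rfl)
        calc Module.finrank F K * Module.finrank K W = Module.finrank F W :=
              Module.finrank_mul_finrank F K W
          _ = Module.finrank F (W.restrictScalars F) := rfl
          _ = Module.finrank F x.1.1 := by rw [hWr]
          _ = m := x.1.2
    · -- from a K-submodule to a fixed point
      refine ⟨⟨W.1.restrictScalars F, ?_⟩, ?_⟩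
      · calc Module.finrank F (W.1.restrictScalars F) = Module.finrank F W.1 := rfl
          _ = Module.finrank F K * Module.finrank K W.1 :=
              (Module.finrank_mul_finrank F K W.1).symm
          _ = m := W.2
      · intro a
        apply Subtype.ext
        rw [hsmul_val, smul_eq_iff_mem_stabField]
        intro u hu
        exact W.1.smul_mem (a : K) (by simpa using hu)
    · intro x
      exact Subtype.ext (Subtype.ext (SetLike.ext fun v => Iff.rfl))
    · intro W
      exact Subtype.ext (SetLike.ext fun v => Iff.rfl)
  rw [hfixcard] at hmain
  exact hmain
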